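/- Fix reals a,b,c > 0 and define polynomials P_w(a,b,c;z) in z by P_1 = 1 − a b z², P_2 = 1 − (a+b) z² + a b (1−c²) z⁴, and P_{w+1} = (1 − (1−c²) z²)·P_w − c² z²·P_{w−1} for w ≥ 2. Then for every integer w ≥ 1, the bridge generating function satisfies, as an identity of formal power series in z: P_w(a,b,c;z) · ( Σ_{n≥0} Z_{w,n,w}(a,b,c) zⁿ ) = b c^{w−1} z^w. -/

import Mathlib

open Filter
open scoped Classical

noncomputable section

/-- Step value of a Boolean step: `true` is an up step (+1), `false` a down step (−1). -/
def stepVal (x : Bool) : ℤ := if x then 1 else -1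

/-- Height of the walk after `k` steps. -/
def ht (σ : ℕ → Bool) (k : ℕ) : ℤ := ∑ i ∈ Finset.range k, stepVal (σ i)

/-- Extend a finite sequence of steps to `ℕ → Bool`. -/
def extFun {n : ℕ} (σ : Fin n → Bool) : ℕ → Bool :=
  fun i => if h : i < n then σ ⟨i, h⟩ else false

/-- The first `n` steps of `σ` stay in the strip `0 ≤ y ≤ w`. -/
def IsWalk (w n : ℕ) (σ : ℕ → Bool) : Prop :=
  ∀ k ≤ n, 0 ≤ ht σ k ∧ ht σ k ≤ (w : ℤ)

/-- Number of contacts with the bottom wall (excluding the origin):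
`m_a(φ) = #{1 ≤ k ≤ n : h_k = 0}`. -/
def ma (n : ℕ) (σ : ℕ → Bool) : ℕ :=
  ((Finset.Icc 1 n).filter (fun k => ht σ k = 0)).card

/-- Number of contacts with the top wall: `m_b(φ) = #{1 ≤ k ≤ n : h_k = w}`. -/
def mb (w n : ℕ) (σ : ℕ → Bool) : ℕ :=
  ((Finset.Icc 1 n).filter (fun k => ht σ k = (w : ℤ))).card

/-- Number of stiffness points: `m_c(φ) = #{1 ≤ k ≤ n−1 : σ_k = σ_{k+1}}`. -/
def mc (n : ℕ) (σ : ℕ → Bool) : ℕ :=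
  ((Finset.range (n - 1)).filter (fun i => σ i = σ (i + 1))).card

/-- Boltzmann weight of a walk: `W(φ) = a^{m_a} b^{m_b} c^{m_c}`. -/
def wt (w n : ℕ) (a b c : ℝ) (σ : ℕ → Bool) : ℝ :=
  a ^ ma n σ * b ^ mb w n σ * c ^ mc n σ

/-- Partition function `Z_{w,n}(a,b,c)`: sum of weights over all walks of length `n`
in the strip of width `w`. -/
def Z (w n : ℕ) (a b c : ℝ) : ℝ :=
  ∑ σ ∈ Finset.univ.filter (fun σ : Fin n → Bool => IsWalk w n (extFun σ)),
    wt w n a b c (extFun σ)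

/-- Fixed-endpoint partition function `Z_{w,n,h}(a,b,c)`: sum over walks of length `n`
in the strip of width `w` ending at height `h`. -/
def Zh (w n h : ℕ) (a b c : ℝ) : ℝ :=
  ∑ σ ∈ Finset.univ.filter
      (fun σ : Fin n → Bool => IsWalk w n (extFun σ) ∧ ht (extFun σ) n = (h : ℤ)),
    wt w n a b c (extFun σ)

end

noncomputable section

open Polynomial in
/-- The polynomials `P_w(a,b,c;z)`: `P_1 = 1 − a b z²`,
`P_2 = 1 − (a+b) z² + a b (1−c²) z⁴`, and
`P_{w+1} = (1 − (1−c²) z²)·P_w − c² z²·P_{w−1}` for `w ≥ 2`.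
(The value at `w = 0` is a dummy.) -/
def Pw (a b c : ℝ) : ℕ → Polynomial ℝ
  | 0 => 1
  | 1 => 1 - C (a * b) * X ^ 2
  | 2 => 1 - C (a + b) * X ^ 2 + C (a * b * (1 - c ^ 2)) * X ^ 4
  | (n + 3) =>
      (1 - C (1 - c ^ 2) * X ^ 2) * Pw a b c (n + 2) - C (c ^ 2) * X ^ 2 * Pw a b c (n + 1)

end

noncomputable section

/-- refined partition function: last step `s`. -/
def Zs (w : ℕ) (a b c : ℝ) (n h : ℕ) (s : Bool) : ℝ :=
  ∑ σ ∈ Finset.univ.filter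
      (fun σ : Fin n → Bool => IsWalk w n (extFun σ) ∧ ht (extFun σ) n = (h : ℤ) ∧
        extFun σ (n - 1) = s),
    wt w n a b c (extFun σ)

lemma ht_succ (f : ℕ → Bool) (k : ℕ) : ht f (k + 1) = ht f k + stepVal (f k) :=
  Finset.sum_range_succ _ _

lemma extFun_zero_fun (σ : Fin 0 → Bool) (i : ℕ) : extFun σ i = false := by
  simp [extFun]

section snoc

variable {n : ℕ} (σ : Fin n → Bool) (s : Bool)

lemma extFun_snoc_lt (i : ℕ) (hi : i < n) :
    extFun (Fin.snoc σ s) i = extFun σ i := by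
  have hi' : i < n + 1 := Nat.lt_succ_of_lt hi
  unfold extFun
  rw [dif_pos hi', dif_pos hi]
  have h2 : (⟨i, hi'⟩ : Fin (n+1)) = Fin.castSucc ⟨i, hi⟩ := rfl
  rw [h2]
  exact Fin.snoc_castSucc (α := fun _ => Bool) s σ ⟨i, hi⟩

lemma extFun_snoc_last : extFun (Fin.snoc σ s) n = s := by
  have hn : n < n + 1 := Nat.lt_succ_self n
  unfold extFun
  rw [dif_pos hn]
  have h2 : (⟨n, hn⟩ : Fin (n+1)) = Fin.last n := rfl
  rw [h2]
  exact Fin.snoc_last (α := fun _ => Bool) s σ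

lemma ht_snoc (k : ℕ) (hk : k ≤ n) :
    ht (extFun (Fin.snoc σ s)) k = ht (extFun σ) k := by
  unfold ht
  refine Finset.sum_congr rfl fun i hi => ?_
  rw [extFun_snoc_lt σ s i (lt_of_lt_of_le (Finset.mem_range.mp hi) hk)]

lemma ht_snoc_succ : ht (extFun (Fin.snoc σ s)) (n + 1) = ht (extFun σ) n + stepVal s := by
  rw [ht_succ, ht_snoc σ s n le_rfl, extFun_snoc_last]

lemma isWalk_snoc (w : ℕ) :
    IsWalk w (n + 1) (extFun (Fin.snoc σ s)) ↔
      IsWalk w n (extFun σ) ∧ 0 ≤ ht (extFun σ) n + stepVal s ∧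
        ht (extFun σ) n + stepVal s ≤ (w : ℤ) := by
  constructor
  · intro H
    refine ⟨fun k hk => ?_, ?_, ?_⟩
    · have := H k (Nat.le_succ_of_le hk)
      rwa [ht_snoc σ s k hk] at this
    · have := (H (n+1) le_rfl).1; rwa [ht_snoc_succ] at this
    · have := (H (n+1) le_rfl).2; rwa [ht_snoc_succ] at this
  · rintro ⟨H, h1, h2⟩ k hk
    rcases Nat.lt_or_ge k (n+1) with hk' | hk'
    · rw [ht_snoc σ s k (Nat.lt_succ_iff.mp hk')]
      exact H k (Nat.lt_succ_iff.mp hk')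
    · have : k = n + 1 := le_antisymm hk hk'
      subst this
      rw [ht_snoc_succ]
      exact ⟨h1, h2⟩

lemma Icc_succ (n : ℕ) : Finset.Icc 1 (n+1) = insert (n+1) (Finset.Icc 1 n) := by
  ext x; simp [Finset.mem_Icc]; omega

lemma ma_snoc : ma (n+1) (extFun (Fin.snoc σ s)) =
    ma n (extFun σ) + (if ht (extFun σ) n + stepVal s = 0 then 1 else 0) := by
  unfold ma
  rw [Icc_succ, Finset.filter_insert]
  have hnot : (n+1) ∉ Finset.Icc 1 n := by simp
  have hcong : Finset.filter (fun k => ht (extFun (Fin.snoc σ s)) k = 0) (Finset.Icc 1 n) =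
      Finset.filter (fun k => ht (extFun σ) k = 0) (Finset.Icc 1 n) := by
    apply Finset.filter_congr
    intro k hk
    rw [ht_snoc σ s k (Finset.mem_Icc.mp hk).2]
  rw [hcong]
  split_ifs with h1 h2 h2
  · rw [Finset.card_insert_of_notMem (fun hx => hnot (Finset.mem_filter.mp hx).1)]
  · exact absurd (by rwa [ht_snoc_succ] at h1) h2
  · exact absurd (by rwa [ht_snoc_succ]) h1
  · simp

lemma mb_snoc (w : ℕ) : mb w (n+1) (extFun (Fin.snoc σ s)) =
    mb w n (extFun σ) + (if ht (extFun σ) n + stepVal s = (w : ℤ) then 1 else 0) := by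
  unfold mb
  rw [Icc_succ, Finset.filter_insert]
  have hnot : (n+1) ∉ Finset.Icc 1 n := by simp
  have hcong : Finset.filter (fun k => ht (extFun (Fin.snoc σ s)) k = (w:ℤ)) (Finset.Icc 1 n) =
      Finset.filter (fun k => ht (extFun σ) k = (w:ℤ)) (Finset.Icc 1 n) := by
    apply Finset.filter_congr
    intro k hk
    rw [ht_snoc σ s k (Finset.mem_Icc.mp hk).2]
  rw [hcong]
  split_ifs with h1 h2 h2
  · rw [Finset.card_insert_of_notMem (fun hx => hnot (Finset.mem_filter.mp hx).1)]
  · exact absurd (by rwa [ht_snoc_succ] at h1) h2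
  · exact absurd (by rwa [ht_snoc_succ]) h1
  · simp

lemma mc_snoc : mc (n+1) (extFun (Fin.snoc σ s)) =
    mc n (extFun σ) + (if n ≠ 0 ∧ extFun σ (n-1) = s then 1 else 0) := by
  unfold mc
  rcases n with _ | m
  · simp
  · -- n = m+1
    have hrange : Finset.range (m + 1 + 1 - 1) = insert m (Finset.range (m + 1 - 1)) := by
      simp [Finset.range_add_one]
    rw [hrange, Finset.filter_insert]
    have hnot : m ∉ Finset.range (m + 1 - 1) := by simp
    have hcong : Finset.filter (fun i => extFun (Fin.snoc σ s) i = extFun (Fin.snoc σ s) (i+1))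
        (Finset.range (m + 1 - 1)) =
        Finset.filter (fun i => extFun σ i = extFun σ (i+1)) (Finset.range (m + 1 - 1)) := by
      apply Finset.filter_congr
      intro i hi
      have hi' : i < m := by simpa using hi
      rw [extFun_snoc_lt σ s i (by omega), extFun_snoc_lt σ s (i+1) (by omega)]
    rw [hcong]
    have hm : extFun (Fin.snoc σ s) m = extFun σ m := extFun_snoc_lt σ s m (by omega)
    have hm1 : extFun (Fin.snoc σ s) (m+1) = s := extFun_snoc_last σ s
    rw [hm, hm1]
    split_ifs with h1 h2 h2
    · rw [Finset.card_insert_of_notMem (fun hx => hnot (Finset.mem_filter.mp hx).1)]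
    · exact absurd ⟨by omega, by simpa using h1⟩ h2
    · exact absurd (by simpa using h2.2) h1
    · simp

lemma wt_snoc (w : ℕ) (a b c : ℝ) :
    wt w (n+1) a b c (extFun (Fin.snoc σ s)) =
      wt w n a b c (extFun σ) *
        ((if ht (extFun σ) n + stepVal s = 0 then a else 1) *
         (if ht (extFun σ) n + stepVal s = (w : ℤ) then b else 1) *
         (if n ≠ 0 ∧ extFun σ (n-1) = s then c else 1)) := by
  unfold wt
  rw [ma_snoc, mb_snoc, mc_snoc]
  rw [pow_add, pow_add, pow_add]
  split_ifs <;> ring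

end snoc

lemma extFun_last {n : ℕ} (σ' : Fin (n+1) → Bool) :
    extFun σ' n = σ' (Fin.last n) := by
  unfold extFun; rw [dif_pos (Nat.lt_succ_self n)]; rfl

lemma eq_snoc_of_last {n : ℕ} (σ' : Fin (n+1) → Bool) (s : Bool) (hs : extFun σ' n = s) :
    σ' = Fin.snoc (Fin.init σ') s := by
  rw [extFun_last] at hs
  rw [← hs]
  exact (Fin.snoc_init_self σ').symm

lemma Zs_succ_up (w : ℕ) (a b c : ℝ) (h n : ℕ) (h1 : 1 ≤ h) (hw : h ≤ w) :
    Zs w a b c (n+1) h true =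
      (if h = w then b else 1) *
        (c * Zs w a b c n (h-1) true + Zs w a b c n (h-1) false) := by
  classical
  have hst : stepVal true = 1 := rfl
  have hcast : ((h - 1 : ℕ) : ℤ) = (h : ℤ) - 1 := by
    have := Nat.cast_sub h1 (R := ℤ); simpa using this
  set T : Finset (Fin n → Bool) := Finset.univ.filter
      (fun σ : Fin n → Bool => IsWalk w n (extFun σ) ∧ ht (extFun σ) n = ((h-1 : ℕ) : ℤ))
    with hT
  have step1 : Zs w a b c (n+1) h true =
      ∑ σ ∈ T, wt w n a b c (extFun σ) *
        ((if h = w then b else 1) * (if extFun σ (n-1) = true then c else 1)) := by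
    unfold Zs
    refine Finset.sum_nbij' Fin.init (fun σ => Fin.snoc σ true) ?_ ?_ ?_ ?_ ?_
    · intro σ' hσ'
      rw [Finset.mem_filter] at hσ'
      obtain ⟨-, hwalk, hht, hlast⟩ := hσ'
      have hsnoc := eq_snoc_of_last σ' true (by simpa using hlast)
      rw [hsnoc] at hwalk hht
      rw [isWalk_snoc] at hwalk
      rw [ht_snoc_succ, hst] at hht
      rw [hT, Finset.mem_filter]
      refine ⟨Finset.mem_univ _, hwalk.1, ?_⟩
      rw [hcast]
      omega
    · intro σ hσ
      rw [hT, Finset.mem_filter] at hσ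
      obtain ⟨-, hwalk, hht⟩ := hσ
      rw [Finset.mem_filter]
      have hh0 : (0:ℤ) ≤ (h:ℤ) := Int.natCast_nonneg h
      have hhw : (h:ℤ) ≤ (w:ℤ) := by exact_mod_cast hw
      refine ⟨Finset.mem_univ _, ?_, ?_, ?_⟩
      · rw [isWalk_snoc]
        refine ⟨hwalk, ?_, ?_⟩ <;> rw [hht, hcast, hst] <;> omega
      · rw [ht_snoc_succ, hht, hcast, hst]; omega
      · simpa using extFun_snoc_last σ true
    · intro σ' hσ'
      rw [Finset.mem_filter] at hσ'
      exact (eq_snoc_of_last σ' true (by simpa using hσ'.2.2.2)).symm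
    · intro σ hσ
      exact Fin.init_snoc (α := fun _ => Bool) true σ
    · intro σ' hσ'
      rw [Finset.mem_filter] at hσ'
      obtain ⟨-, hwalk, hht, hlast⟩ := hσ'
      have hsnoc := eq_snoc_of_last σ' true (by simpa using hlast)
      rw [hsnoc] at hht
      rw [ht_snoc_succ, hst] at hht
      conv_lhs => rw [hsnoc]
      rw [wt_snoc]
      congr 1
      have hne0 : ¬(ht (extFun (Fin.init σ')) n + stepVal true = 0) := by rw [hst]; omega
      have hbfac : (if ht (extFun (Fin.init σ')) n + stepVal true = (w:ℤ) then b else 1) =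
          (if h = w then b else 1) := by
        rw [hst]
        by_cases hhw' : h = w
        · rw [if_pos (by omega : ht (extFun (Fin.init σ')) n + 1 = (w:ℤ)), if_pos hhw']
          -- need (h:ℤ) = w from h = w
        · rw [if_neg ?_, if_neg hhw']
          intro hcontr
          apply hhw'
          have : (h:ℤ) = (w:ℤ) := by omega
          exact_mod_cast this
      have hcfac : (if n ≠ 0 ∧ extFun (Fin.init σ') (n-1) = true then c else 1) =
          (if extFun (Fin.init σ') (n-1) = true then c else 1) := by
        rcases n with _ | m
        · rw [extFun_zero_fun]; simp
        · simp
      rw [if_neg hne0, hbfac, hcfac]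
      ring
  rw [step1]
  rw [← Finset.sum_filter_add_sum_filter_not T (fun σ => extFun σ (n-1) = true)]
  have e1 : T.filter (fun σ => extFun σ (n-1) = true) =
      Finset.univ.filter (fun σ : Fin n → Bool => IsWalk w n (extFun σ) ∧
        ht (extFun σ) n = ((h-1:ℕ) : ℤ) ∧ extFun σ (n-1) = true) := by
    rw [hT, Finset.filter_filter]
    apply Finset.filter_congr; intro σ _; tauto
  have e2 : T.filter (fun σ => ¬(extFun σ (n-1) = true)) =
      Finset.univ.filter (fun σ : Fin n → Bool => IsWalk w n (extFun σ) ∧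
        ht (extFun σ) n = ((h-1:ℕ) : ℤ) ∧ extFun σ (n-1) = false) := by
    rw [hT, Finset.filter_filter]
    apply Finset.filter_congr; intro σ _
    simp only [Bool.not_eq_true]; tauto
  rw [e1, e2]
  have hA : ∀ σ ∈ Finset.univ.filter (fun σ : Fin n → Bool => IsWalk w n (extFun σ) ∧
        ht (extFun σ) n = ((h-1:ℕ) : ℤ) ∧ extFun σ (n-1) = true),
      wt w n a b c (extFun σ) * ((if h = w then b else 1) * (if extFun σ (n-1) = true then c else 1))
        = ((if h = w then b else 1) * c) * wt w n a b c (extFun σ) := by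
    intro σ hσ
    rw [Finset.mem_filter] at hσ
    rw [if_pos hσ.2.2.2]; ring
  have hB : ∀ σ ∈ Finset.univ.filter (fun σ : Fin n → Bool => IsWalk w n (extFun σ) ∧
        ht (extFun σ) n = ((h-1:ℕ) : ℤ) ∧ extFun σ (n-1) = false),
      wt w n a b c (extFun σ) * ((if h = w then b else 1) * (if extFun σ (n-1) = true then c else 1))
        = (if h = w then b else 1) * wt w n a b c (extFun σ) := by
    intro σ hσ
    rw [Finset.mem_filter] at hσ
    rw [hσ.2.2.2]
    simp only [Bool.false_eq_true, if_false]
    ring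
  rw [Finset.sum_congr rfl hA, Finset.sum_congr rfl hB, ← Finset.mul_sum, ← Finset.mul_sum]
  unfold Zs
  ring

lemma ht_zero (f : ℕ → Bool) : ht f 0 = 0 := by
  simp [ht]

lemma Zs_succ_down (w : ℕ) (a b c : ℝ) (h n : ℕ) (hw : h + 1 ≤ w) :
    Zs w a b c (n+1) h false =
      (if h = 0 then a else 1) *
        (c * Zs w a b c n (h+1) false + Zs w a b c n (h+1) true) := by
  classical
  have hst : stepVal false = -1 := rfl
  set T : Finset (Fin n → Bool) := Finset.univ.filter
      (fun σ : Fin n → Bool => IsWalk w n (extFun σ) ∧ ht (extFun σ) n = ((h+1 : ℕ) : ℤ))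
    with hT
  have step1 : Zs w a b c (n+1) h false =
      ∑ σ ∈ T, wt w n a b c (extFun σ) *
        ((if h = 0 then a else 1) * (if extFun σ (n-1) = false then c else 1)) := by
    unfold Zs
    refine Finset.sum_nbij' Fin.init (fun σ => Fin.snoc σ false) ?_ ?_ ?_ ?_ ?_
    · intro σ' hσ'
      rw [Finset.mem_filter] at hσ'
      obtain ⟨-, hwalk, hht, hlast⟩ := hσ'
      have hsnoc := eq_snoc_of_last σ' false (by simpa using hlast)
      rw [hsnoc] at hwalk hht
      rw [isWalk_snoc] at hwalk
      rw [ht_snoc_succ, hst] at hht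
      rw [hT, Finset.mem_filter]
      refine ⟨Finset.mem_univ _, hwalk.1, ?_⟩
      push_cast
      omega
    · intro σ hσ
      rw [hT, Finset.mem_filter] at hσ
      obtain ⟨-, hwalk, hht⟩ := hσ
      rw [Finset.mem_filter]
      have hh0 : (0:ℤ) ≤ (h:ℤ) := Int.natCast_nonneg h
      have hhw : (h:ℤ) + 1 ≤ (w:ℤ) := by exact_mod_cast hw
      have hcast : ((h + 1 : ℕ) : ℤ) = (h : ℤ) + 1 := by push_cast; ring
      refine ⟨Finset.mem_univ _, ?_, ?_, ?_⟩
      · rw [isWalk_snoc]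
        refine ⟨hwalk, ?_, ?_⟩ <;> rw [hht, hcast, hst] <;> omega
      · rw [ht_snoc_succ, hht, hcast, hst]; omega
      · simpa using extFun_snoc_last σ false
    · intro σ' hσ'
      rw [Finset.mem_filter] at hσ'
      exact (eq_snoc_of_last σ' false (by simpa using hσ'.2.2.2)).symm
    · intro σ hσ
      exact Fin.init_snoc (α := fun _ => Bool) false σ
    · intro σ' hσ'
      rw [Finset.mem_filter] at hσ'
      obtain ⟨-, hwalk, hht, hlast⟩ := hσ'
      have hsnoc := eq_snoc_of_last σ' false (by simpa using hlast)
      rw [hsnoc] at hht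
      rw [ht_snoc_succ, hst] at hht
      conv_lhs => rw [hsnoc]
      rw [wt_snoc]
      congr 1
      have hh0 : (0:ℤ) ≤ (h:ℤ) := Int.natCast_nonneg h
      have hhw : (h:ℤ) + 1 ≤ (w:ℤ) := by exact_mod_cast hw
      have hnw : ¬(ht (extFun (Fin.init σ')) n + stepVal false = (w:ℤ)) := by rw [hst]; omega
      have hafac : (if ht (extFun (Fin.init σ')) n + stepVal false = 0 then a else 1) =
          (if h = 0 then a else 1) := by
        rw [hst]
        by_cases hh' : h = 0
        · rw [if_pos (by omega : ht (extFun (Fin.init σ')) n + -1 = 0), if_pos hh']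
        · rw [if_neg ?_, if_neg hh']
          intro hcontr
          apply hh'
          have : (h:ℤ) = 0 := by omega
          exact_mod_cast this
      have hcfac : (if n ≠ 0 ∧ extFun (Fin.init σ') (n-1) = false then c else 1) =
          (if extFun (Fin.init σ') (n-1) = false then c else 1) := by
        rcases n with _ | m
        · exfalso
          rw [ht_zero] at hht
          omega
        · simp
      rw [if_neg hnw, hafac, hcfac]
      ring
  rw [step1]
  rw [← Finset.sum_filter_add_sum_filter_not T (fun σ => extFun σ (n-1) = false)]
  have e1 : T.filter (fun σ => extFun σ (n-1) = false) =
      Finset.univ.filter (fun σ : Fin n → Bool => IsWalk w n (extFun σ) ∧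
        ht (extFun σ) n = ((h+1:ℕ) : ℤ) ∧ extFun σ (n-1) = false) := by
    rw [hT, Finset.filter_filter]
    apply Finset.filter_congr; intro σ _; tauto
  have e2 : T.filter (fun σ => ¬(extFun σ (n-1) = false)) =
      Finset.univ.filter (fun σ : Fin n → Bool => IsWalk w n (extFun σ) ∧
        ht (extFun σ) n = ((h+1:ℕ) : ℤ) ∧ extFun σ (n-1) = true) := by
    rw [hT, Finset.filter_filter]
    apply Finset.filter_congr; intro σ _
    simp only [Bool.not_eq_false]; tauto
  rw [e1, e2]
  have hA : ∀ σ ∈ Finset.univ.filter (fun σ : Fin n → Bool => IsWalk w n (extFun σ) ∧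
        ht (extFun σ) n = ((h+1:ℕ) : ℤ) ∧ extFun σ (n-1) = false),
      wt w n a b c (extFun σ) * ((if h = 0 then a else 1) * (if extFun σ (n-1) = false then c else 1))
        = ((if h = 0 then a else 1) * c) * wt w n a b c (extFun σ) := by
    intro σ hσ
    rw [Finset.mem_filter] at hσ
    rw [if_pos hσ.2.2.2]; ring
  have hB : ∀ σ ∈ Finset.univ.filter (fun σ : Fin n → Bool => IsWalk w n (extFun σ) ∧
        ht (extFun σ) n = ((h+1:ℕ) : ℤ) ∧ extFun σ (n-1) = true),
      wt w n a b c (extFun σ) * ((if h = 0 then a else 1) * (if extFun σ (n-1) = false then c else 1))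
        = (if h = 0 then a else 1) * wt w n a b c (extFun σ) := by
    intro σ hσ
    rw [Finset.mem_filter] at hσ
    rw [hσ.2.2.2]
    simp only [Bool.true_eq_false, if_false]
    ring
  rw [Finset.sum_congr rfl hA, Finset.sum_congr rfl hB, ← Finset.mul_sum, ← Finset.mul_sum]
  unfold Zs
  ring

lemma Zh_eq_Zs (w n h : ℕ) (a b c : ℝ) :
    Zh w n h a b c = Zs w a b c n h true + Zs w a b c n h false := by
  classical
  unfold Zh Zs
  rw [← Finset.sum_filter_add_sum_filter_not
    (Finset.univ.filter (fun σ : Fin n → Bool => IsWalk w n (extFun σ) ∧ ht (extFun σ) n = (h:ℤ)))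
    (fun σ => extFun σ (n-1) = true)]
  congr 1
  · apply Finset.sum_congr
    · rw [Finset.filter_filter]
      apply Finset.filter_congr; intro σ _; tauto
    · intros; rfl
  · apply Finset.sum_congr
    · rw [Finset.filter_filter]
      apply Finset.filter_congr; intro σ _
      simp only [Bool.not_eq_true]; tauto
    · intros; rfl

lemma Zs_zero (w h : ℕ) (a b c : ℝ) (s : Bool) :
    Zs w a b c 0 h s = if h = 0 ∧ s = false then 1 else 0 := by
  classical
  unfold Zs
  have huniv : (Finset.univ : Finset (Fin 0 → Bool)) = {fun i => false} := by
    apply Finset.eq_singleton_iff_unique_mem.mpr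
    exact ⟨Finset.mem_univ _, fun σ _ => funext fun i => absurd i.2 (by omega)⟩
  by_cases hcond : h = 0 ∧ s = false
  · obtain ⟨h0, hs⟩ := hcond
    subst h0; subst hs
    rw [if_pos ⟨rfl, rfl⟩]
    have : (Finset.univ.filter (fun σ : Fin 0 → Bool => IsWalk w 0 (extFun σ) ∧
        ht (extFun σ) 0 = ((0:ℕ):ℤ) ∧ extFun σ (0-1) = false)) = Finset.univ := by
      apply Finset.filter_true_of_mem
      intro σ _
      refine ⟨?_, by rw [ht_zero]; simp, by rw [extFun_zero_fun]⟩
      intro k hk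
      interval_cases k
      rw [ht_zero]
      exact ⟨le_refl 0, Int.natCast_nonneg w⟩
    rw [this, huniv, Finset.sum_singleton]
    unfold wt ma mb mc
    simp
  · rw [if_neg hcond]
    apply Finset.sum_eq_zero
    intro σ hσ
    rw [Finset.mem_filter] at hσ
    obtain ⟨-, -, hht, hlast⟩ := hσ
    exfalso
    apply hcond
    rw [ht_zero] at hht
    rw [extFun_zero_fun] at hlast
    exact ⟨by exact_mod_cast hht.symm, hlast.symm⟩

lemma Zs_bot_up (w n : ℕ) (a b c : ℝ) :
    Zs w a b c n 0 true = 0 := by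
  classical
  apply Finset.sum_eq_zero
  intro σ hσ
  rw [Finset.mem_filter] at hσ
  obtain ⟨-, hwalk, hht, hlast⟩ := hσ
  exfalso
  rcases n with _ | m
  · rw [extFun_zero_fun] at hlast; simp at hlast
  · simp only [Nat.add_sub_cancel] at hlast
    rw [ht_succ, hlast] at hht
    have hst : stepVal true = 1 := rfl
    rw [hst] at hht
    have := (hwalk m (Nat.le_succ m)).1
    simp at hht
    omega

lemma Zs_top_down (w n : ℕ) (a b c : ℝ) (hw : 1 ≤ w) :
    Zs w a b c n w false = 0 := by
  classical
  apply Finset.sum_eq_zero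
  intro σ hσ
  rw [Finset.mem_filter] at hσ
  obtain ⟨-, hwalk, hht, hlast⟩ := hσ
  exfalso
  rcases n with _ | m
  · rw [ht_zero] at hht
    have : (0:ℤ) < (w:ℤ) := by exact_mod_cast hw
    omega
  · simp only [Nat.add_sub_cancel] at hlast
    rw [ht_succ, hlast] at hht
    have hst : stepVal false = -1 := rfl
    rw [hst] at hht
    have := (hwalk m (Nat.le_succ m)).2
    omega

end

noncomputable section


open Polynomial in
/-- `A_k`: the top-boundary polynomials, `A_0 = C b`, `A_k = P_k(1,b,c)` for `k ≥ 1`. -/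
def Ap (b c : ℝ) (k : ℕ) : Polynomial ℝ :=
  if k = 0 then Polynomial.C b else Pw 1 b c k

open Polynomial in
/-- `B_k`: companion polynomials. -/
def Bp (b c : ℝ) : ℕ → Polynomial ℝ
  | 0 => 0
  | (k+1) => Polynomial.X ^ 2 * (Polynomial.C (c^2) * Bp b c k + Ap b c k)

section PolyLemmas

open Polynomial

variable (b c : ℝ)

lemma Bp_succ (k : ℕ) : Bp b c (k+1) = X ^ 2 * (C (c^2) * Bp b c k + Ap b c k) := rfl

lemma Ap_zero : Ap b c 0 = C b := rfl

lemma Ap_eq (k : ℕ) : Ap b c (k+1) = Pw 1 b c (k+1) := by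
  simp [Ap]

lemma Ap_rec (k : ℕ) :
    Ap b c (k+3) = (1 - C (1 - c^2) * X^2) * Ap b c (k+2) - C (c^2) * X^2 * Ap b c (k+1) := by
  rw [Ap_eq, Ap_eq, Ap_eq]
  rfl

lemma AB (k : ℕ) : Ap b c (k+2) = Ap b c (k+1) - Bp b c (k+2) := by
  induction k with
  | zero =>
      rw [Bp_succ, Bp_succ, Ap_eq, Ap_eq, Ap_zero]
      show Pw 1 b c 2 = _
      unfold Pw
      simp only [Bp, map_sub, map_add, map_mul, map_one, map_pow, mul_zero, zero_add]
      ring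
  | succ m ih =>
      have hB : Bp b c (m+2) = Ap b c (m+1) - Ap b c (m+2) := by
        rw [ih]; ring
      have hB3 : Bp b c (m+3) = X^2 * (C (c^2) * Bp b c (m+2) + Ap b c (m+2)) :=
        Bp_succ b c (m+2)
      show Ap b c (m+3) = Ap b c (m+2) - Bp b c (m+3)
      rw [Ap_rec b c m, hB3, hB]
      simp only [map_sub, map_one, map_pow]
      ring

lemma Bp_rec (k : ℕ) :
    Bp b c (k+3) = (1 - C (1 - c^2) * X^2) * Bp b c (k+2) - C (c^2) * X^2 * Bp b c (k+1) := by
  have hB2 : Bp b c (k+2) = X^2 * (C (c^2) * Bp b c (k+1) + Ap b c (k+1)) := Bp_succ b c (k+1)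
  have hB3 : Bp b c (k+3) = X^2 * (C (c^2) * Bp b c (k+2) + Ap b c (k+2)) := Bp_succ b c (k+2)
  have hA : Ap b c (k+2) = Ap b c (k+1) - Bp b c (k+2) := AB b c k
  rw [hB3, hA, hB2]
  simp only [map_sub, map_one, map_pow]
  ring

lemma ApBp (k : ℕ) :
    Ap b c k - C (if k = 0 then b else 1) * Bp b c (k+1) =
      C (if k = 0 then b else 1) * Ap b c (k+1) := by
  rcases k with _ | m
  · have he : (if (0:ℕ) = 0 then b else 1) = b := if_pos rfl
    rw [he, Ap_zero, Ap_eq, Bp_succ, Ap_zero]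
    show _ = C b * Pw 1 b c 1
    unfold Pw
    simp only [Bp, map_sub, map_add, map_mul, map_one, map_pow, mul_zero, zero_add, one_mul]
    ring
  · simp only [Nat.succ_ne_zero, if_false, map_one, one_mul]
    rw [AB]

lemma PwL (a : ℝ) (k : ℕ) :
    Pw a b c (k+2) =
      Ap b c (k+1) - C a * X^2 * (C (c^2) * Bp b c (k+1) + Ap b c (k+1)) := by
  induction k using Nat.twoStepInduction with
  | zero =>
      rw [Ap_eq, Bp_succ, Ap_zero]
      show Pw a b c 2 = _
      unfold Pw
      simp only [Bp, map_sub, map_add, map_mul, map_one, map_pow, mul_zero, zero_add, one_mul]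
      ring
  | one =>
      rw [Ap_eq, Bp_succ, Bp_succ, Ap_zero, Ap_eq]
      show Pw a b c 3 = _
      show (1 - C (1 - c ^ 2) * X ^ 2) * Pw a b c 2 - C (c ^ 2) * X ^ 2 * Pw a b c 1 = _
      unfold Pw
      simp only [Bp, map_sub, map_add, map_mul, map_one, map_pow, mul_zero, zero_add, one_mul]
      ring
  | more m ih1 ih2 =>
      show (1 - C (1 - c ^ 2) * X ^ 2) * Pw a b c (m+3) - C (c ^ 2) * X ^ 2 * Pw a b c (m+2) = _
      rw [show m + 3 = (m+1) + 2 from rfl, ih2, ih1, Ap_rec, Bp_rec]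
      simp only [map_sub, map_one, map_pow]
      ring

end PolyLemmas

section PS

open PowerSeries

variable (w : ℕ) (a b c : ℝ)

/-- generating function of walks ending at height `h` with last step up -/
def Us (h : ℕ) : PowerSeries ℝ := PowerSeries.mk fun n => Zs w a b c n h true

/-- generating function of walks ending at height `h` with last step down
(including the empty walk at `h = 0`). -/
def Ds (h : ℕ) : PowerSeries ℝ := PowerSeries.mk fun n => Zs w a b c n h false

lemma Us_zero : Us w a b c 0 = 0 := by
  ext n
  simp [Us, Zs_bot_up]

lemma Ds_top (hw : 1 ≤ w) : Ds w a b c w = 0 := by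
  ext n
  simp [Ds, Zs_top_down w n a b c hw]

lemma Us_eq (h : ℕ) (h1 : 1 ≤ h) (h2 : h ≤ w) :
    Us w a b c h = PowerSeries.X * PowerSeries.C (if h = w then b else 1) *
      (PowerSeries.C c * Us w a b c (h-1) + Ds w a b c (h-1)) := by
  ext n
  rcases n with _ | n
  · simp [Us, Zs_zero, PowerSeries.coeff_zero_eq_constantCoeff]
  · rw [mul_assoc, PowerSeries.coeff_succ_X_mul]
    simp only [Us, Ds, map_mul, map_add, PowerSeries.coeff_mk, PowerSeries.coeff_C_mul]
    exact Zs_succ_up w a b c h n h1 h2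

lemma Ds_eq (h : ℕ) (h2 : h < w) :
    Ds w a b c h = PowerSeries.C (if h = 0 then 1 else 0) +
      PowerSeries.X * PowerSeries.C (if h = 0 then a else 1) *
      (PowerSeries.C c * Ds w a b c (h+1) + Us w a b c (h+1)) := by
  ext n
  rcases n with _ | n
  · simp only [Ds, PowerSeries.coeff_zero_eq_constantCoeff, map_add, map_mul,
      PowerSeries.constantCoeff_X, zero_mul, add_zero, PowerSeries.constantCoeff_C,
      PowerSeries.constantCoeff_mk]
    rw [Zs_zero]
    by_cases h0 : h = 0 <;> simp [h0]
  · rw [map_add, mul_assoc, PowerSeries.coeff_succ_X_mul]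
    simp only [Us, Ds, map_mul, map_add, PowerSeries.coeff_mk, PowerSeries.coeff_C_mul,
      PowerSeries.coeff_C, Nat.succ_ne_zero, if_false, zero_add]
    exact Zs_succ_down w a b c h n h2

end PS

lemma C_ne_zero_PS {r : ℝ} (hr : r ≠ 0) : (PowerSeries.C r) ≠ 0 :=
  fun h => hr (PowerSeries.C_injective (by rw [h, map_zero]))

lemma claims (w : ℕ) (a b c : ℝ) (hb : 0 < b) (hc : 0 < c) (hw : 1 ≤ w) :
    ∀ k, k < w →
      ((Ap b c k : PowerSeries ℝ) * Us w a b c w =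
        PowerSeries.C b * (PowerSeries.C c)^k * PowerSeries.X^k * Us w a b c (w-k)) ∧
      (PowerSeries.C c * (Bp b c k : PowerSeries ℝ) * Us w a b c w =
        PowerSeries.C b * (PowerSeries.C c)^k * PowerSeries.X^k * Ds w a b c (w-k)) := by
  intro k
  induction k with
  | zero =>
      intro hk
      constructor
      · simp [Ap_zero, Polynomial.coe_C]
      · have hD : Ds w a b c w = 0 := Ds_top w a b c hw
        show PowerSeries.C c * ((0 : Polynomial ℝ) : PowerSeries ℝ) * _ = _
        rw [Nat.sub_zero, hD]
        simp
  | succ k ih =>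
      intro hk
      obtain ⟨ih1, ih2⟩ := ih (by omega)
      have hDeq := Ds_eq w a b c (w-(k+1)) (by omega)
      rw [if_neg (by omega : ¬(w - (k+1) = 0)), if_neg (by omega : ¬(w - (k+1) = 0)),
        show w - (k+1) + 1 = w - k by omega] at hDeq
      simp only [map_zero, map_one, zero_add, mul_one] at hDeq
      -- hDeq : Ds (w-(k+1)) = X * (C c * Ds (w-k) + Us (w-k))
      have hBcoe : ((Bp b c (k+1) : Polynomial ℝ) : PowerSeries ℝ) =
          (PowerSeries.X : PowerSeries ℝ)^2 *
            ((PowerSeries.C c)^2 * (Bp b c k : PowerSeries ℝ) +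
              (Ap b c k : PowerSeries ℝ)) := by
        rw [Bp_succ]
        simp only [Polynomial.coe_mul, Polynomial.coe_pow, Polynomial.coe_X,
          Polynomial.coe_add, Polynomial.coe_C, map_pow]
      have hC2 : PowerSeries.C c * (Bp b c (k+1) : PowerSeries ℝ) * Us w a b c w =
          PowerSeries.C b * (PowerSeries.C c)^(k+1) * PowerSeries.X^(k+1) *
            Ds w a b c (w-(k+1)) := by
        rw [hBcoe, hDeq]
        linear_combination ((PowerSeries.C c)^2 * PowerSeries.X^2) * ih2 +
          (PowerSeries.C c * PowerSeries.X^2) * ih1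
      refine ⟨?_, hC2⟩
      have hUeq := Us_eq w a b c (w-k) (by omega) (by omega)
      have hbfac : (if w - k = w then b else 1) = (if k = 0 then b else 1) := by
        by_cases hk0 : k = 0
        · rw [if_pos hk0, if_pos (by omega)]
        · rw [if_neg hk0, if_neg (by omega)]
      rw [hbfac, show w - k - 1 = w - (k+1) by omega] at hUeq
      have hCc0 : (PowerSeries.C c) ≠ 0 := C_ne_zero_PS hc.ne'
      have hB' : (Bp b c (k+1) : PowerSeries ℝ) * Us w a b c w =
          PowerSeries.C b * (PowerSeries.C c)^k * PowerSeries.X^(k+1) *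
            Ds w a b c (w-(k+1)) := by
        apply mul_left_cancel₀ hCc0
        linear_combination hC2
      have hCe0 : (PowerSeries.C (if k = 0 then b else 1)) ≠ 0 := by
        apply C_ne_zero_PS
        split_ifs
        · exact hb.ne'
        · exact one_ne_zero
      apply mul_left_cancel₀ hCe0
      have hApBp : ((Ap b c k : Polynomial ℝ) : PowerSeries ℝ) -
          PowerSeries.C (if k = 0 then b else 1) * (Bp b c (k+1) : PowerSeries ℝ) =
          PowerSeries.C (if k = 0 then b else 1) * ((Ap b c (k+1) : Polynomial ℝ) :
            PowerSeries ℝ) := by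
        have hcast := congrArg (fun p : Polynomial ℝ => (p : PowerSeries ℝ)) (ApBp b c k)
        simpa only [Polynomial.coe_sub, Polynomial.coe_mul, Polynomial.coe_C] using hcast
      linear_combination ih1 +
        (PowerSeries.C b * (PowerSeries.C c)^k * PowerSeries.X^k) * hUeq -
        PowerSeries.C (if k = 0 then b else 1) * hB' -
        (Us w a b c w) * hApBp

theorem bridge_generating_function' (a b c : ℝ) (ha : 0 < a) (hb : 0 < b) (hc : 0 < c)
    (w : ℕ) (hw : 1 ≤ w) :
    ((Pw a b c w : PowerSeries ℝ) * PowerSeries.mk (fun n => Zh w n w a b c)) =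
      PowerSeries.C (b * c ^ (w - 1)) * PowerSeries.X ^ w := by
  have hUw : PowerSeries.mk (fun n => Zh w n w a b c) = Us w a b c w := by
    ext n
    simp [Us, Zh_eq_Zs, Zs_top_down w n a b c hw]
  rw [hUw]
  rcases eq_or_lt_of_le hw with hw1 | hw2
  · -- w = 1
    subst hw1
    have hU := Us_eq 1 a b c 1 le_rfl le_rfl
    rw [if_pos rfl, Us_zero] at hU
    have hD := Ds_eq 1 a b c 0 (by omega)
    rw [if_pos rfl, if_pos rfl, Ds_top 1 a b c le_rfl] at hD
    simp only [show (1:ℕ)-1 = 0 from rfl, show (0:ℕ)+1 = 1 from rfl, map_one] at hU hD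
    show ((1 - Polynomial.C (a * b) * Polynomial.X ^ 2 : Polynomial ℝ) : PowerSeries ℝ) * _ = _
    simp only [show (1:ℕ)-1 = 0 from rfl, Polynomial.coe_sub, Polynomial.coe_one,
      Polynomial.coe_mul, Polynomial.coe_C,
      Polynomial.coe_pow, Polynomial.coe_X, map_mul, map_one, pow_zero, mul_one, pow_one]
    linear_combination hU + (PowerSeries.X * PowerSeries.C b) * hD
  · -- w ≥ 2
    obtain ⟨k, rfl⟩ : ∃ k, w = k + 2 := ⟨w - 2, by omega⟩
    obtain ⟨hA, hB⟩ := claims (k+2) a b c hb hc hw (k+1) (by omega)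
    rw [show k + 2 - (k+1) = 1 by omega] at hA hB
    have hU1 := Us_eq (k+2) a b c 1 le_rfl (by omega)
    rw [if_neg (by omega), Us_zero] at hU1
    simp only [map_one, mul_one] at hU1
    have hD0 := Ds_eq (k+2) a b c 0 (by omega)
    rw [if_pos rfl, if_pos rfl] at hD0
    simp only [map_one] at hD0
    have hPwcast : ((Pw a b c (k+2) : Polynomial ℝ) : PowerSeries ℝ) =
        ((Ap b c (k+1) : Polynomial ℝ) : PowerSeries ℝ) -
          PowerSeries.C a * PowerSeries.X^2 *
            ((PowerSeries.C c)^2 * ((Bp b c (k+1) : Polynomial ℝ) : PowerSeries ℝ) +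
              ((Ap b c (k+1) : Polynomial ℝ) : PowerSeries ℝ)) := by
      have hcast := congrArg (fun p : Polynomial ℝ => (p : PowerSeries ℝ)) (PwL b c a k)
      simpa only [Polynomial.coe_sub, Polynomial.coe_mul, Polynomial.coe_add,
        Polynomial.coe_C, Polynomial.coe_pow, Polynomial.coe_X, map_pow] using hcast
    rw [hPwcast]
    rw [show k + 2 - 1 = k + 1 from rfl]
    rw [show (PowerSeries.C (b * c ^ (k+1)) : PowerSeries ℝ) =
      PowerSeries.C b * (PowerSeries.C c)^(k+1) by rw [map_mul, map_pow]]
    linear_combination (1 - PowerSeries.C a * PowerSeries.X^2) * hA +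
      (PowerSeries.C b * (PowerSeries.C c)^(k+1) * PowerSeries.X^(k+1)) * hU1 +
      (PowerSeries.C b * (PowerSeries.C c)^(k+1) * PowerSeries.X^(k+2)) * hD0 -
      (PowerSeries.C a * PowerSeries.X^2 * PowerSeries.C c) * hB

end

/-- `P_w(a,b,c;z) · (Σ_n Z_{w,n,w} zⁿ) = b c^{w−1} z^w` as formal power
series. -/
theorem bridge_generating_function (a b c : ℝ) (ha : 0 < a) (hb : 0 < b) (hc : 0 < c)
    (w : ℕ) (hw : 1 ≤ w) :
    ((Pw a b c w : PowerSeries ℝ) * PowerSeries.mk (fun n => Zh w n w a b c)) =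
      PowerSeries.C (b * c ^ (w - 1)) * PowerSeries.X ^ w :=
  bridge_generating_function' a b c ha hb hc w hw
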